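/- Let n ≥ 3, 0 < m < (n-2)/n, α < 0, β < 0 with 2/(1-m) < α/β < (n-2)/m. Suppose f : (0,∞) → (0,∞) is C² satisfying the radial equation (f^m)'' + ((n-1)/r)(f^m)' + αf + βr f' = 0 on (0,∞) and lim_{r→∞} r^{(n-2)/m} f(r) = η for some η > 0. Then αf(r) + βr f'(r) > 0 for all r > 0; equivalently, since Δf^m = -(αf + βr f'), one has Δf^m < 0 on (0,∞). -/

import Mathlib

set_option maxHeartbeats 1000000

open Set Filter

theorem stmt_13 (n : ℕ) (hn : 3 ≤ n) (m α β η : ℝ)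
    (hm0 : 0 < m) (hm1 : m < ((n : ℝ) - 2) / n)
    (hα : α < 0) (hβ : β < 0)
    (hr1 : 2 / (1 - m) < α / β) (hr2 : α / β < ((n : ℝ) - 2) / m)
    (hη : 0 < η)
    (f : ℝ → ℝ)
    (hf2 : ContDiffOn ℝ 2 f (Ioi 0))
    (hfpos : ∀ r ∈ Ioi (0 : ℝ), 0 < f r)
    (hode : ∀ r ∈ Ioi (0 : ℝ),
      deriv (deriv (fun s => f s ^ m)) r + (((n : ℝ) - 1) / r) * deriv (fun s => f s ^ m) r
        + α * f r + β * r * deriv f r = 0)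
    (hlim : Tendsto (fun r => r ^ (((n : ℝ) - 2) / m) * f r) atTop (nhds η)) :
    ∀ r ∈ Ioi (0 : ℝ), 0 < α * f r + β * r * deriv f r := by
  set γ : ℝ := α / β with hγdef
  have hn3 : (3:ℝ) ≤ (n:ℝ) := by exact_mod_cast hn
  have hm1' : m < 1 := by
    have h1 : ((n:ℝ) - 2) / n < 1 := by
      rw [div_lt_one (by linarith : (0:ℝ) < n)]; linarith
    linarith
  have h1m : (0:ℝ) < 1 - m := by linarith
  have hγpos : 0 < γ := lt_trans (div_pos two_pos h1m) hr1
  have hαβγ : α = β * γ := by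
    rw [hγdef, mul_div_assoc', mul_comm, mul_div_assoc, div_self hβ.ne, mul_one]
  have hmγ : m * γ < (n:ℝ) - 2 := by
    have := (lt_div_iff₀ hm0).mp hr2
    linarith
  -- differentiability infrastructure
  have hfd : ∀ r ∈ Ioi (0:ℝ), HasDerivAt f (deriv f r) r := by
    intro r hr
    exact ((hf2.differentiableOn (by norm_num)).differentiableAt
      (isOpen_Ioi.mem_nhds hr)).hasDerivAt
  have hfd2 : ∀ r ∈ Ioi (0:ℝ), HasDerivAt (deriv f) (deriv (deriv f) r) r := by
    intro r hr
    have hcd1 : ContDiffOn ℝ 1 (deriv f) (Ioi 0) :=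
      hf2.deriv_of_isOpen isOpen_Ioi (by norm_num)
    exact ((hcd1.differentiableOn (by norm_num)).differentiableAt
      (isOpen_Ioi.mem_nhds hr)).hasDerivAt
  set G : ℝ → ℝ := fun s => s ^ γ * deriv f s + γ * (s ^ (γ - 1) * f s) with hGdef
  set g : ℝ → ℝ := fun s => s ^ γ * f s with hgdef
  -- rpow identities
  have hpow1 : ∀ r : ℝ, 0 < r → r ^ γ = r ^ (γ-1) * r := by
    intro r hr
    have h := Real.rpow_add_one (ne_of_gt hr) (γ-1)
    rw [show γ - 1 + 1 = γ by ring] at h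
    simpa using h
  have hpow2 : ∀ r : ℝ, 0 < r → r ^ (γ-1) = r ^ (γ-2) * r := by
    intro r hr
    have h := Real.rpow_add_one (ne_of_gt hr) (γ-2)
    rw [show γ - 2 + 1 = γ - 1 by ring] at h
    simpa using h
  -- derivative of g
  have hg' : ∀ r ∈ Ioi (0:ℝ), HasDerivAt g (G r) r := by
    intro r hr
    have h1 : HasDerivAt (fun s : ℝ => s ^ γ) (γ * r ^ (γ-1)) r :=
      Real.hasDerivAt_rpow_const (Or.inl (ne_of_gt hr))
    have h2 : HasDerivAt (fun s => s ^ γ * f s) (γ * r ^ (γ-1) * f r + r ^ γ * deriv f r) r :=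
      h1.mul (hfd r hr)
    convert h2 using 1
    show (fun s => s ^ γ * deriv f s + γ * (s ^ (γ - 1) * f s)) r = _
    beta_reduce; ring
  have hgderiv : ∀ r ∈ Ioi (0:ℝ), deriv g r = G r := fun r hr => (hg' r hr).deriv
  -- key lemma
  have key : ∀ r ∈ Ioi (0:ℝ), G r = 0 → ∃ u > r, ∀ s ∈ Ioo r u, 0 < G s := by
    intro r hr hGr
    have hrpos : (0:ℝ) < r := hr
    have hfr : 0 < f r := hfpos r hr
    have hrγ1 : (0:ℝ) < r ^ (γ-1) := Real.rpow_pos_of_pos hrpos _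
    have hrγ2 : (0:ℝ) < r ^ (γ-2) := Real.rpow_pos_of_pos hrpos _
    have hu : r * deriv f r + γ * f r = 0 := by
      have h0 : r ^ (γ-1) * (r * deriv f r + γ * f r) = 0 := by
        rw [← hGr]; simp only [hGdef]; rw [hpow1 r hrpos]; ring
      rcases mul_eq_zero.mp h0 with h | h
      · exact absurd h (ne_of_gt hrγ1)
      · exact h
    have hF' : deriv f r = -(γ * f r) / r := by
      rw [eq_div_iff (ne_of_gt hrpos)]
      linarith
    -- second derivative of f^m
    have hVd : ∀ s ∈ Ioi (0:ℝ), HasDerivAt (fun t => f t ^ m) (m * (f s ^ (m-1) * deriv f s)) s := by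
      intro s hs
      have h1 : HasDerivAt (fun x : ℝ => x ^ m) (m * f s ^ (m-1)) (f s) :=
        Real.hasDerivAt_rpow_const (Or.inl (ne_of_gt (hfpos s hs)))
      have h2 := h1.comp s (hfd s hs)
      have h3 : m * f s ^ (m-1) * deriv f s = m * (f s ^ (m-1) * deriv f s) := by ring
      rw [h3] at h2
      exact h2
    have hVderiv : ∀ s ∈ Ioi (0:ℝ), deriv (fun t => f t ^ m) s = m * (f s ^ (m-1) * deriv f s) :=
      fun s hs => (hVd s hs).deriv
    have hVeq : deriv (fun t => f t ^ m) =ᶠ[nhds r] fun s => m * (f s ^ (m-1) * deriv f s) :=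
      eventually_of_mem (isOpen_Ioi.mem_nhds hr) hVderiv
    have hV2 : HasDerivAt (fun s => m * (f s ^ (m-1) * deriv f s))
        (m * ((m-1) * f r ^ (m-2) * deriv f r * deriv f r + f r ^ (m-1) * deriv (deriv f) r)) r := by
      have h1 : HasDerivAt (fun s => f s ^ (m-1)) ((m-1) * f r ^ (m-2) * deriv f r) r := by
        have h := (Real.hasDerivAt_rpow_const (x := f r) (p := m-1)
          (Or.inl (ne_of_gt hfr))).comp r (hfd r hr)
        rw [show m - 1 - 1 = m - 2 by ring] at h
        exact h
      exact (h1.mul (hfd2 r hr)).const_mul m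
    have hV2deriv : deriv (deriv (fun t => f t ^ m)) r
        = m * ((m-1) * f r ^ (m-2) * deriv f r * deriv f r + f r ^ (m-1) * deriv (deriv f) r) := by
      rw [hVeq.deriv_eq]; exact hV2.deriv
    have hE := hode r hr
    rw [hV2deriv, hVderiv r hr] at hE
    -- f^(m-1) = f^(m-2) * f
    have hfpow : f r ^ (m-1) = f r ^ (m-2) * f r := by
      have h := Real.rpow_add_one (ne_of_gt hfr) (m-2)
      rw [show m - 2 + 1 = m - 1 by ring] at h
      simpa using h
    have hA : (0:ℝ) < f r ^ (m-2) := Real.rpow_pos_of_pos hfr _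
    -- solve for f''
    have hf'' : deriv (deriv f) r = ((1-m)*γ^2 + ((n:ℝ)-1)*γ) * f r / r^2 := by
      rw [hfpow, hF', hαβγ] at hE
      have hrne : r ≠ 0 := ne_of_gt hrpos
      have hAne : f r ^ (m-2) ≠ 0 := ne_of_gt hA
      have hFne : f r ≠ 0 := ne_of_gt hfr
      have hmne : m ≠ 0 := ne_of_gt hm0
      field_simp at hE
      have h6 : m * f r ^ (m-2) * f r * r *
          (deriv (deriv f) r * r^2 - ((1-m)*γ^2 + ((n:ℝ)-1)*γ) * f r) = 0 := by
        linear_combination r * hE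
      have h7 : m * f r ^ (m-2) * f r * r ≠ 0 := by positivity
      have h8 : deriv (deriv f) r * r^2 - ((1-m)*γ^2 + ((n:ℝ)-1)*γ) * f r = 0 :=
        by rcases mul_eq_zero.mp h6 with h | h
           · exact absurd h h7
           · exact h
      rw [eq_div_iff (by positivity : (r:ℝ)^2 ≠ 0)]
      linarith
    -- derivative of G at r
    have hKG : HasDerivAt G
        (γ * r^(γ-1) * deriv f r + r^γ * deriv (deriv f) r
          + γ * ((γ-1) * r^(γ-2) * f r + r^(γ-1) * deriv f r)) r := by
      have hK1 : HasDerivAt (fun s : ℝ => s ^ γ * deriv f s)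
          (γ * r^(γ-1) * deriv f r + r^γ * deriv (deriv f) r) r :=
        (Real.hasDerivAt_rpow_const (Or.inl (ne_of_gt hrpos))).mul (hfd2 r hr)
      have hK2 : HasDerivAt (fun s : ℝ => s ^ (γ-1) * f s)
          ((γ-1) * r^(γ-2) * f r + r^(γ-1) * deriv f r) r := by
        have h := (Real.hasDerivAt_rpow_const (x := r) (p := γ-1)
          (Or.inl (ne_of_gt hrpos))).mul (hfd r hr)
        rw [show γ - 1 - 1 = γ - 2 by ring] at h
        exact h
      exact hK1.add (hK2.const_mul γ)
    set K := γ * r^(γ-1) * deriv f r + r^γ * deriv (deriv f) r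
      + γ * ((γ-1) * r^(γ-2) * f r + r^(γ-1) * deriv f r) with hKdef
    have hKeq : K = r^(γ-2) * f r * γ * (((n:ℝ)-2) - m*γ) := by
      rw [hKdef, hF', hf'', hpow1 r hrpos, hpow2 r hrpos]
      field_simp
      ring
    have hKpos : 0 < K := by
      rw [hKeq]
      have : (0:ℝ) < ((n:ℝ)-2) - m*γ := by linarith
      positivity
    -- slope argument
    have hslope := hasDerivAt_iff_tendsto_slope.mp hKG
    have h1 : ∀ᶠ s in nhdsWithin r {r}ᶜ, 0 < slope G r s :=
      hslope.eventually (eventually_gt_nhds hKpos)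
    have h2 : ∀ᶠ s in nhdsWithin r (Ioi r), 0 < slope G r s :=
      h1.filter_mono (nhdsWithin_mono r (fun s hs => ne_of_gt hs))
    have hev : ∀ᶠ s in nhdsWithin r (Ioi r), 0 < G s := by
      filter_upwards [h2, self_mem_nhdsWithin] with s hs1 hs2
      rw [slope_def_field, hGr, sub_zero] at hs1
      have hsr : 0 < s - r := sub_pos.mpr hs2
      by_contra hc
      push_neg at hc
      rcases div_pos_iff.mp hs1 with ⟨h, _⟩ | ⟨_, h⟩
      · linarith
      · linarith
    rcases mem_nhdsGT_iff_exists_Ioo_subset.mp hev with ⟨u, hu, hsub⟩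
    exact ⟨u, hu, fun s hs => hsub hs⟩
  -- increasing lemma
  have incr : ∀ c : ℝ, 0 < c → ∀ u, c < u → (∀ s ∈ Ioo c u, 0 < G s) →
      ∀ t ∈ Ioo c u, g c < g t := by
    intro c hc u hcu hpos t htm
    have hcont : ContinuousOn g (Icc c t) := by
      intro x hx
      have hx0 : (0:ℝ) < x := lt_of_lt_of_le hc hx.1
      exact ((hg' x hx0).continuousAt).continuousWithinAt
    have hmono := strictMonoOn_of_deriv_pos (convex_Icc c t) hcont (by
      intro x hx
      rw [interior_Icc] at hx
      have hx0 : (0:ℝ) < x := lt_trans hc hx.1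
      rw [hgderiv x hx0]
      exact hpos x ⟨hx.1, lt_trans hx.2 htm.2⟩)
    exact hmono (left_mem_Icc.mpr (le_of_lt htm.1)) (right_mem_Icc.mpr (le_of_lt htm.1)) htm.1
  -- step lemma
  have step : ∀ r ∈ Ioi (0:ℝ), 0 ≤ G r → ∃ t > r, g r < g t := by
    intro r hr hGr
    rcases eq_or_lt_of_le hGr with hGr0 | hGr0
    · obtain ⟨u, hu, hGu⟩ := key r hr hGr0.symm
      refine ⟨(r+u)/2, by linarith [hu], ?_⟩
      exact incr r hr u hu hGu ((r+u)/2) ⟨by linarith [hu], by linarith [hu]⟩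
    · have hslope := hasDerivAt_iff_tendsto_slope.mp (hg' r hr)
      have h1 : ∀ᶠ s in nhdsWithin r {r}ᶜ, 0 < slope g r s :=
        hslope.eventually (eventually_gt_nhds hGr0)
      have h2 : ∀ᶠ s in nhdsWithin r (Ioi r), 0 < slope g r s :=
        h1.filter_mono (nhdsWithin_mono r (fun s hs => ne_of_gt hs))
      obtain ⟨s, hs1, hs2⟩ := (h2.and self_mem_nhdsWithin).exists
      refine ⟨s, hs2, ?_⟩
      rw [slope_def_field] at hs1
      have hsr : 0 < s - r := sub_pos.mpr hs2
      rcases div_pos_iff.mp hs1 with ⟨h, _⟩ | ⟨_, h⟩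
      · linarith
      · linarith
  -- g tends to 0
  have hg0 : Tendsto g atTop (nhds 0) := by
    set d : ℝ := ((n:ℝ)-2)/m with hddef
    have hγd : γ < d := hr2
    have h1 : Tendsto (fun r : ℝ => r ^ (γ - d)) atTop (nhds 0) := by
      have := tendsto_rpow_neg_atTop (show 0 < d - γ by linarith)
      simpa [neg_sub] using this
    have h2 := h1.mul hlim
    rw [zero_mul] at h2
    apply h2.congr'
    filter_upwards [eventually_gt_atTop (0:ℝ)] with s hs
    simp only [hgdef]
    rw [← mul_assoc, ← Real.rpow_add hs, show γ - d + d = γ by ring]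
  -- main: G < 0 everywhere
  have main : ∀ r ∈ Ioi (0:ℝ), G r < 0 := by
    intro r hr
    by_contra hcon
    push_neg at hcon
    obtain ⟨t, ht, hgt⟩ := step r hr hcon
    have hgr : 0 < g r := mul_pos (Real.rpow_pos_of_pos hr _) (hfpos r hr)
    have hR : ∀ᶠ s in atTop, g s < g r := hg0.eventually (eventually_lt_nhds hgr)
    obtain ⟨R, hgR, hRt⟩ := (hR.and (eventually_gt_atTop t)).exists
    have hrt : r < t := ht
    have hrR : r ≤ R := le_of_lt (lt_trans hrt hRt)
    have hcont : ContinuousOn g (Icc r R) := by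
      intro x hx
      have hx0 : (0:ℝ) < x := lt_of_lt_of_le hr hx.1
      exact ((hg' x hx0).continuousAt).continuousWithinAt
    obtain ⟨c, hcmem, hcmax⟩ := (isCompact_Icc).exists_isMaxOn
      ⟨r, left_mem_Icc.mpr hrR⟩ hcont
    have hct : g t ≤ g c := hcmax ⟨le_of_lt hrt, le_of_lt hRt⟩
    have hcr : r < c := by
      rcases lt_or_eq_of_le hcmem.1 with h | h
      · exact h
      · exfalso; rw [← h] at hct; linarith
    have hcR : c < R := by
      rcases lt_or_eq_of_le hcmem.2 with h | h
      · exact h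
      · exfalso; rw [h] at hct; linarith
    have hc0 : (0:ℝ) < c := lt_trans hr hcr
    have hloc : IsLocalMax g c := hcmax.isLocalMax (Icc_mem_nhds hcr hcR)
    have hGc : G c = 0 := by rw [← hgderiv c hc0]; exact hloc.deriv_eq_zero
    obtain ⟨u, hu, hGu⟩ := key c hc0 hGc
    set t' : ℝ := min ((c+u)/2) ((c+R)/2) with ht'def
    have hct' : c < t' := lt_min (by linarith [hu]) (by linarith)
    have ht'u : t' < u := lt_of_le_of_lt (min_le_left _ _) (by linarith [hu])
    have hgt' : g c < g t' := incr c hc0 u hu hGu t' ⟨hct', ht'u⟩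
    have ht'mem : t' ∈ Icc r R :=
      ⟨le_of_lt (lt_trans hcr hct'), le_trans (min_le_right _ _) (by linarith)⟩
    exact absurd (hcmax ht'mem) (not_le.mpr hgt')
  -- conclude
  intro r hr
  have hrpos : (0:ℝ) < r := hr
  have hG := main r hr
  have hrγ1 : (0:ℝ) < r ^ (γ-1) := Real.rpow_pos_of_pos hrpos _
  have hfac : G r = r^(γ-1) * (r * deriv f r + γ * f r) := by
    simp only [hGdef]; rw [hpow1 r hrpos]; ring
  have hneg : r * deriv f r + γ * f r < 0 := by
    by_contra hc
    push_neg at hc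
    nlinarith [mul_nonneg (le_of_lt hrγ1) hc]
  have : 0 < β * (r * deriv f r + γ * f r) := mul_pos_of_neg_of_neg hβ hneg
  rw [hαβγ]
  nlinarith [this]
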